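/- In the ring ℚ[[x]] of formal power series, let R := Σ_{n≥1} n^(n−1) x^n/n! (the exponential generating function of rooted labeled trees) and T := Σ_{n≥1} n^(n−2) x^n/n! (the exponential generating function of unrooted labeled trees). Then T = R − R²/2. Equivalently, for every integer n ≥ 2, n^(n−2) = n^(n−1) − (1/2)·Σ_{k=1}^{n−1} binom(n,k)·k^(k−1)·(n−k)^(n−k−1). -/

import Mathlib

/-- The exponential generating function of rooted labeled trees,
`R(x) = Σ_{n≥1} n^(n-1) xⁿ/n!`. -/
noncomputable def rootedTreeEgf : PowerSeries ℚ :=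
  PowerSeries.mk fun n => if n = 0 then 0 else (n : ℚ) ^ (n - 1) / (n.factorial : ℚ)

/-- The exponential generating function of unrooted labeled trees,
`T(x) = Σ_{n≥1} n^(n-2) xⁿ/n!`. -/
noncomputable def treeEgf : PowerSeries ℚ :=
  PowerSeries.mk fun n => if n = 0 then 0 else (n : ℚ) ^ (n - 2) / (n.factorial : ℚ)

open Finset Function
open scoped fwdDiff

lemma pow_fwdDiff_zero : ∀ j : ℕ, ∀ m : ℕ, j < m → (fwdDiff (1:ℚ))^[m] (fun x : ℚ => x ^ j) = 0 := by
  intro j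
  induction j using Nat.strong_induction_on with
  | _ j ih =>
    intro m hm
    obtain ⟨m', rfl⟩ : ∃ m', m = m' + 1 := ⟨m - 1, by omega⟩
    rw [Function.iterate_succ_apply]
    have hΔ : fwdDiff (1:ℚ) (fun x : ℚ => x ^ j) = ∑ i ∈ Finset.range j, ((j.choose i : ℚ)) • (fun x : ℚ => x ^ i) := by
      funext x
      simp only [fwdDiff, Finset.sum_apply, Pi.smul_apply, smul_eq_mul]
      rw [add_pow]
      rw [Finset.sum_range_succ]
      simp [mul_comm]
    rw [hΔ, fwdDiff_iter_finset_sum]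
    apply Finset.sum_eq_zero
    intro i hi
    simp only [Finset.mem_range] at hi
    rw [fwdDiff_iter_const_smul, ih i hi m' (by omega), smul_zero]

lemma alt_sum_choose_pow (m : ℕ) (hm : 1 ≤ m) :
    ∑ k ∈ Finset.range (m+1), (-1:ℚ)^(m-k) * (m.choose k) * (k:ℚ)^(m-1) = 0 := by
  have h := fwdDiff_iter_eq_sum_shift (1:ℚ) (fun x : ℚ => x ^ (m-1)) m 0
  rw [pow_fwdDiff_zero (m-1) m (by omega)] at h
  simp only [Pi.zero_apply, zero_add, nsmul_eq_mul, mul_one, zsmul_eq_mul] at h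
  rw [eq_comm] at h
  convert h using 2 with k
  push_cast
  ring

lemma choose_swap (n k j : ℕ) (hk : k ≤ n) :
    n.choose k * (n-k).choose j = n.choose j * (n-j).choose k := by
  by_cases h : k + j ≤ n
  · have h1 := Nat.choose_mul (n := n) (k := k + j) (s := k) (Nat.le_add_right k j)
    have h2 := Nat.choose_mul (n := n) (k := k + j) (s := j) (Nat.le_add_left j k)
    have h3 : (k+j).choose k = (k+j).choose j := by
      rw [← Nat.choose_symm (Nat.le_add_left j k)]
      congr 1
      omega
    rw [show k + j - k = j by omega] at h1
    rw [show k + j - j = k by omega] at h2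
    rw [← h1, ← h2, h3]
  · rw [Nat.choose_eq_zero_of_lt (by omega : n - k < j), mul_zero]
    by_cases hj : j ≤ n
    · rw [Nat.choose_eq_zero_of_lt (by omega : n - j < k), mul_zero]
    · rw [Nat.choose_eq_zero_of_lt (by omega : n < j), zero_mul]

lemma cayley_sum (n : ℕ) (hn : 1 ≤ n) :
    ∑ k ∈ Finset.Icc 1 n, (n.choose k : ℚ) * (k:ℚ)^(k-1) * ((n-k:ℕ):ℚ)^(n-k) = (n:ℚ)^n := by
  set g : ℕ → ℕ → ℚ := fun j k =>
    (n.choose j : ℚ) * ((n-j).choose k : ℚ) * (n:ℚ)^j * (-1:ℚ)^(n-j-k) * (k:ℚ)^(n-j-1) with hg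
  have step1 : ∀ k ∈ Finset.Icc 1 n,
      (n.choose k : ℚ) * (k:ℚ)^(k-1) * ((n-k:ℕ):ℚ)^(n-k) = ∑ j ∈ Finset.range n, g j k := by
    intro k hk
    simp only [Finset.mem_Icc] at hk
    have hcast : ((n-k:ℕ):ℚ) = (n:ℚ) + (-(k:ℚ)) := by
      push_cast [hk.2]; ring
    rw [hcast, add_pow]
    rw [Finset.mul_sum]
    rw [← Finset.sum_subset (Finset.range_subset_range.mpr (by omega : n - k + 1 ≤ n))
      (fun j hjt hj => by
        simp only [Finset.mem_range] at hjt hj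
        rw [hg]
        simp only []
        rw [Nat.choose_eq_zero_of_lt (by omega : n - j < k)]
        push_cast
        ring)]
    apply Finset.sum_congr rfl
    intro j hj
    simp only [Finset.mem_range] at hj
    have hjnk : j ≤ n - k := by omega
    have hsw : (n.choose k : ℚ) * ((n-k).choose j : ℚ) = (n.choose j : ℚ) * ((n-j).choose k : ℚ) := by
      exact_mod_cast congrArg (fun x : ℕ => (x:ℚ)) (choose_swap n k j hk.2)
    have he1 : n - k - j = n - j - k := by omega
    have he2 : (k:ℚ)^(k-1) * (k:ℚ)^(n-j-k) = (k:ℚ)^(n-j-1) := by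
      rw [← pow_add]
      congr 1
      omega
    rw [hg]
    simp only []
    rw [neg_pow]
    calc (n.choose k : ℚ) * (k:ℚ)^(k-1) * ((n:ℚ)^j * ((-1:ℚ)^(n-k-j) * (k:ℚ)^(n-k-j)) * ((n-k).choose j : ℚ))
        = ((n.choose k : ℚ) * ((n-k).choose j : ℚ)) * (n:ℚ)^j * (-1:ℚ)^(n-k-j) * ((k:ℚ)^(k-1) * (k:ℚ)^(n-k-j)) := by ring
      _ = (n.choose j : ℚ) * ((n-j).choose k : ℚ) * (n:ℚ)^j * (-1:ℚ)^(n-j-k) * (k:ℚ)^(n-j-1) := by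
          rw [hsw, he1, he2]

  rw [Finset.sum_congr rfl step1, Finset.sum_comm]
  have step3 : ∀ j ∈ Finset.range n,
      ∑ k ∈ Finset.Icc 1 n, g j k = (n.choose j : ℚ) * (n:ℚ)^j * (if n - j = 1 then 1 else 0) := by
    intro j hj
    simp only [Finset.mem_range] at hj
    set m := n - j with hm
    have hm1 : 1 ≤ m := by omega
    have hsub : Finset.Icc 1 m ⊆ Finset.Icc 1 n := Finset.Icc_subset_Icc_right (by omega)
    have hrestrict : ∑ k ∈ Finset.Icc 1 n, g j k = ∑ k ∈ Finset.Icc 1 m, g j k := by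
      rw [← Finset.sum_subset hsub]
      intro k hk1 hk2
      simp only [Finset.mem_Icc] at hk1 hk2
      rw [hg]
      simp only []
      rw [Nat.choose_eq_zero_of_lt (by omega : m < k)]
      push_cast; ring
    have halt : ∑ k ∈ Finset.Icc 1 m, (-1:ℚ)^(m-k) * (m.choose k) * (k:ℚ)^(m-1)
        = if m = 1 then 1 else 0 := by
      have h0 := alt_sum_choose_pow m hm1
      have hins : Finset.range (m+1) = insert 0 (Finset.Icc 1 m) := by
        ext x; simp [Finset.mem_range, Finset.mem_Icc]; omega
      rw [hins, Finset.sum_insert (by simp)] at h0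
      have hzero : (-1:ℚ)^(m-0) * (m.choose 0) * ((0:ℕ):ℚ)^(m-1)
          = if m = 1 then -1 else 0 := by
        rcases eq_or_lt_of_le hm1 with h | h
        · simp [← h]
        · rw [if_neg (by omega)]
          rw [(by norm_num : ((0:ℕ):ℚ) = 0), zero_pow (by omega : m - 1 ≠ 0)]
          ring
      rw [hzero] at h0
      rcases eq_or_ne m 1 with h | h <;> simp [h] at h0 ⊢ <;> linarith
    rw [hrestrict]
    calc ∑ k ∈ Finset.Icc 1 m, g j k
        = (n.choose j : ℚ) * (n:ℚ)^j * ∑ k ∈ Finset.Icc 1 m, (-1:ℚ)^(m-k) * (m.choose k) * (k:ℚ)^(m-1) := by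
          rw [Finset.mul_sum]
          apply Finset.sum_congr rfl
          intro k hk
          rw [hg]; simp only []; ring
      _ = (n.choose j : ℚ) * (n:ℚ)^j * (if m = 1 then 1 else 0) := by rw [halt]
  rw [Finset.sum_congr rfl step3]
  rw [Finset.sum_eq_single_of_mem (n-1) (by simp [Finset.mem_range]; omega : n - 1 ∈ Finset.range n)
    (fun j hj hne => by
      rw [if_neg (by simp at hj; omega : ¬ (n - j = 1))]
      ring)]
  rw [if_pos (by omega : n - (n-1) = 1)]
  rw [show n.choose (n-1) = n by rw [Nat.choose_symm (by omega : 1 ≤ n), Nat.choose_one_right]]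
  rw [mul_one, ← pow_succ']
  congr 1
  omega

lemma tree_sum (n : ℕ) (hn : 2 ≤ n) :
    ∑ k ∈ Finset.Icc 1 (n-1), (n.choose k : ℚ) * (k:ℚ)^(k-1) * ((n-k:ℕ):ℚ)^(n-k-1)
      = 2*(n:ℚ)^(n-1) - 2*(n:ℚ)^(n-2) := by
  have hB : ∑ k ∈ Finset.Icc 1 (n-1), (n.choose k : ℚ) * (k:ℚ)^(k-1) * ((n-k:ℕ):ℚ)^(n-k)
      = (n:ℚ)^n - (n:ℚ)^(n-1) := by
    have hins : Finset.Icc 1 n = insert n (Finset.Icc 1 (n-1)) := by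
      ext x; simp [Finset.mem_Icc]; omega
    have hc := cayley_sum n (by omega)
    rw [hins, Finset.sum_insert (by simp [Finset.mem_Icc]; omega)] at hc
    rw [Nat.choose_self, Nat.sub_self] at hc
    simp only [Nat.cast_one, Nat.cast_zero, pow_zero, one_mul, mul_one] at hc
    linarith
  have hB' : ∑ k ∈ Finset.Icc 1 (n-1), (n.choose k : ℚ) * (k:ℚ)^k * ((n-k:ℕ):ℚ)^(n-k-1)
      = ∑ k ∈ Finset.Icc 1 (n-1), (n.choose k : ℚ) * (k:ℚ)^(k-1) * ((n-k:ℕ):ℚ)^(n-k) := by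
    apply Finset.sum_nbij' (i := fun k => n - k) (j := fun k => n - k)
    · intro a ha; simp only [Finset.mem_Icc] at ha ⊢; omega
    · intro a ha; simp only [Finset.mem_Icc] at ha ⊢; omega
    · intro a ha; simp only [Finset.mem_Icc] at ha; omega
    · intro a ha; simp only [Finset.mem_Icc] at ha; omega
    · intro a ha
      simp only [Finset.mem_Icc] at ha
      rw [Nat.choose_symm (by omega : a ≤ n)]
      rw [show n - (n - a) = a by omega]
      ring
  have hmul : (n:ℚ) * ∑ k ∈ Finset.Icc 1 (n-1), (n.choose k : ℚ) * (k:ℚ)^(k-1) * ((n-k:ℕ):ℚ)^(n-k-1)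
      = ((n:ℚ)^n - (n:ℚ)^(n-1)) + ((n:ℚ)^n - (n:ℚ)^(n-1)) := by
    rw [Finset.mul_sum]
    rw [show ((n:ℚ)^n - (n:ℚ)^(n-1)) + ((n:ℚ)^n - (n:ℚ)^(n-1))
        = (∑ k ∈ Finset.Icc 1 (n-1), (n.choose k : ℚ) * (k:ℚ)^(k-1) * ((n-k:ℕ):ℚ)^(n-k))
          + ∑ k ∈ Finset.Icc 1 (n-1), (n.choose k : ℚ) * (k:ℚ)^k * ((n-k:ℕ):ℚ)^(n-k-1) from by
      rw [hB', hB]]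
    rw [← Finset.sum_add_distrib]
    apply Finset.sum_congr rfl
    intro k hk
    simp only [Finset.mem_Icc] at hk
    have h1 : ((n-k:ℕ):ℚ)^(n-k) = ((n-k:ℕ):ℚ)^(n-k-1) * ((n-k:ℕ):ℚ) := by
      rw [← pow_succ]
      congr 1
      omega
    have h2 : (k:ℚ)^k = (k:ℚ)^(k-1) * (k:ℚ) := by
      rw [← pow_succ]
      congr 1
      omega
    have h3 : (n:ℚ) = ((n-k:ℕ):ℚ) + (k:ℚ) := by push_cast [hk.2.trans (by omega : n-1 ≤ n)]; ring
    rw [h1, h2]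
    rw [h3]
    ring
  have hn0 : (n:ℚ) ≠ 0 := by positivity
  apply mul_left_cancel₀ hn0
  rw [hmul]
  have e1 : (n:ℚ)^n = (n:ℚ) * (n:ℚ)^(n-1) := by
    rw [← pow_succ']; congr 1; omega
  have e2 : (n:ℚ)^(n-1) = (n:ℚ) * (n:ℚ)^(n-2) := by
    rw [← pow_succ']; congr 1; omega
  rw [e1]
  nth_rewrite 2 4 [e2]
  ring

/-- The identity `T = R - R²/2` relating the generating functions of unrooted and rooted
labeled trees; equivalently, for every `n ≥ 2`,
`n^(n-2) = n^(n-1) - (1/2)·Σ_{k=1}^{n-1} C(n,k)·k^(k-1)·(n-k)^(n-k-1)`. -/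
theorem treeEgf_eq_rootedTreeEgf_sub_half_sq :
    treeEgf = rootedTreeEgf - PowerSeries.C (1 / 2 : ℚ) * rootedTreeEgf ^ 2 ∧
    ∀ n : ℕ, 2 ≤ n →
      (n : ℚ) ^ (n - 2) = (n : ℚ) ^ (n - 1) -
        (1 / 2) * ∑ k ∈ Finset.Icc 1 (n - 1),
          (n.choose k : ℚ) * (k : ℚ) ^ (k - 1) * ((n - k : ℕ) : ℚ) ^ (n - k - 1) := by
  have key : ∀ n : ℕ, 2 ≤ n →
      (n : ℚ) ^ (n - 2) = (n : ℚ) ^ (n - 1) -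
        (1 / 2) * ∑ k ∈ Finset.Icc 1 (n - 1),
          (n.choose k : ℚ) * (k : ℚ) ^ (k - 1) * ((n - k : ℕ) : ℚ) ^ (n - k - 1) := by
    intro n hn
    rw [tree_sum n hn]
    ring
  refine ⟨?_, key⟩
  ext n
  rw [map_sub, sq, PowerSeries.coeff_C_mul, PowerSeries.coeff_mul,
    Finset.Nat.sum_antidiagonal_eq_sum_range_succ_mk]
  simp only [treeEgf, rootedTreeEgf, PowerSeries.coeff_mk]
  match n, (by omega : n = 0 ∨ n = 1 ∨ 2 ≤ n) with
  | 0, _ => norm_num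
  | 1, _ => norm_num [Finset.sum_range_succ]
  | n, Or.inr (Or.inr hn) =>
    rw [if_neg (by omega), if_neg (by omega)]
    have hsum : ∑ k ∈ Finset.range (n+1),
        ((if k = 0 then 0 else (k:ℚ)^(k-1)/(k.factorial:ℚ)) *
          (if n - k = 0 then 0 else ((n-k:ℕ):ℚ)^(n-k-1)/((n-k).factorial:ℚ)))
        = ∑ k ∈ Finset.Icc 1 (n-1),
          (n.choose k : ℚ) * (k:ℚ)^(k-1) * ((n-k:ℕ):ℚ)^(n-k-1) / (n.factorial:ℚ) := by
      rw [← Finset.sum_subset (show Finset.Icc 1 (n-1) ⊆ Finset.range (n+1) by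
          intro x hx; simp only [Finset.mem_Icc] at hx; simp only [Finset.mem_range]; omega)
        (fun k hk1 hk2 => by
          simp only [Finset.mem_range] at hk1
          simp only [Finset.mem_Icc, not_and, not_le] at hk2
          rcases (by omega : k = 0 ∨ n - k = 0) with h | h
          · rw [if_pos h, zero_mul]
          · rw [if_pos h, mul_zero])]
      apply Finset.sum_congr rfl
      intro k hk
      simp only [Finset.mem_Icc] at hk
      rw [if_neg (by omega), if_neg (by omega)]
      rw [Nat.cast_choose ℚ (by omega : k ≤ n)]
      have h1 : (k.factorial : ℚ) ≠ 0 := by exact_mod_cast k.factorial_ne_zero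
      have h2 : ((n-k).factorial : ℚ) ≠ 0 := by exact_mod_cast (n-k).factorial_ne_zero
      have h3 : (n.factorial : ℚ) ≠ 0 := by exact_mod_cast n.factorial_ne_zero
      field_simp
    rw [hsum, ← Finset.sum_div, tree_sum n hn]
    have h3 : (n.factorial : ℚ) ≠ 0 := by exact_mod_cast n.factorial_ne_zero
    field_simp
    ring
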